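/- Let m, n ≥ 1, let S ⊆ 𝔽₂^m be a subspace and Δ ∈ 𝔽₂^m ∖ S; let S_Δ be the subspace spanned by S and Δ, Ŝ := (S_Δ)⊥, and Δ̂ any vector in S⊥ ∖ Ŝ. Let x = (x₁, …, x_n), z = (z₁, …, z_n) ∈ (𝔽₂^m)ⁿ and ψ ∈ ℂ[𝔽₂ⁿ]. Then for every μ ∈ 𝔽₂ⁿ: ∑_{c = (c₁,…,c_n) with cᵢ ∈ Ŝ + μᵢΔ̂ + zᵢ for all i} |⟨c| (H^{⊗m})^{⊗n} (X^{x₁}Z^{z₁} ⊗ ⋯ ⊗ X^{x_n}Z^{z_n}) E_{S,Δ}^{⊗n} ψ⟩|² = |(H^{⊗n}ψ)(μ)|², where H^{⊗n} is the n-qubit Hadamard on ℂ[𝔽₂ⁿ] given by ⟨u|H^{⊗n}|v⟩ = 2^{−n/2}(−1)^{u·v}. In words: measuring the authenticated state in the Hadamard basis yields, with the same probability as measuring ψ in the Hadamard basis with outcome μ, a tuple of vectors lying in the dual product coset ∏ᵢ (Ŝ + μᵢΔ̂ + zᵢ), which classically decodes to μ. -/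

import Mathlib

/-!
The Hadamard-basis case of the correctness of the publicly-verifiable authentication
scheme of "Quantum State Obfuscation from Classical Oracles": measuring the
authenticated state `X^x Z^z E_{S,Δ}^{⊗n} ψ` in the Hadamard basis yields, with the
same probability as measuring `ψ` in the Hadamard basis with outcome `μ`, a tuple of
vectors in the dual product coset `∏ᵢ (Ŝ + μᵢΔ̂ + zᵢ)`, which classically decodes
to `μ`.
-/

open scoped BigOperators

noncomputable section

attribute [local instance] Classical.propDecidable

abbrev Fvec (n : ℕ) : Type := Fin n → ZMod 2

abbrev QSpace (n : ℕ) : Type := EuclideanSpace ℂ (Fvec n)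

/-- The ±1 lift of a bit: `+1` if `b = 0` and `−1` if `b = 1`. -/
def sgn (b : ZMod 2) : ℂ := if b = 0 then 1 else -1

/-- The dot product over `𝔽₂`. -/
def dotp {n : ℕ} (x y : Fvec n) : ZMod 2 := ∑ i, x i * y i

/-- The orthogonal complement `T⊥ = {w : w·t = 0 for all t ∈ T}` with respect to the
`𝔽₂` dot product. -/
def dualSub {n : ℕ} (T : Submodule (ZMod 2) (Fvec n)) : Submodule (ZMod 2) (Fvec n) where
  carrier := {w | ∀ t ∈ T, dotp w t = 0}
  add_mem' := by
    intro a b ha hb t ht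
    have h : dotp (a + b) t = dotp a t + dotp b t := by
      simp [dotp, add_mul, Finset.sum_add_distrib]
    rw [h, ha t ht, hb t ht, add_zero]
  zero_mem' := by
    intro t ht
    simp [dotp]
  smul_mem' := by
    intro c a ha t ht
    have h : dotp (c • a) t = c * dotp a t := by
      simp [dotp, Finset.mul_sum, mul_assoc]
    rw [h, ha t ht, mul_zero]

/-- The normalized coset state `|T+a⟩ = |T|^{−1/2} ∑_{t ∈ T} |t+a⟩`
(note that `v = t + a` iff `v + a ∈ T`, as we are in characteristic two). -/
def cosetState {n : ℕ} (T : Submodule (ZMod 2) (Fvec n)) (a : Fvec n) : QSpace n :=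
  WithLp.toLp 2 (fun v => if v + a ∈ T then ((Real.sqrt (Nat.card ↥T) : ℂ))⁻¹ else 0)

/-- The subspace `S_Δ` spanned by `S` and `Δ`, i.e. `S ∪ (S + Δ)` when `Δ ∉ S`. -/
def extSpan {n : ℕ} (S : Submodule (ZMod 2) (Fvec n)) (Δ : Fvec n) :
    Submodule (ZMod 2) (Fvec n) :=
  S ⊔ Submodule.span (ZMod 2) {Δ}

/-- The `m`-qubit Hadamard `H^{⊗m}`, with matrix entries
`⟨u|H^{⊗m}|v⟩ = 2^{−m/2} (−1)^{u·v}`. -/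
def Had {n : ℕ} (ψ : QSpace n) : QSpace n :=
  WithLp.toLp 2 (fun u => (Real.sqrt (2 ^ n) : ℂ)⁻¹ * ∑ v, sgn (dotp u v) * ψ v)

/-- The `n`-register code space `ℂ[(𝔽₂^m)ⁿ]`. -/
abbrev QSpaceN (m n : ℕ) : Type := EuclideanSpace ℂ (Fin n → Fvec m)

/-- The authenticated (encoded-and-encrypted) state `X^x Z^z E_{S,Δ}^{⊗n} ψ`, where
`E_{S,Δ}|0⟩ = |S⟩`, `E_{S,Δ}|1⟩ = |S+Δ⟩` acts qubit-wise and `X^{x_i} Z^{z_i}` is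
applied to the `i`-th register. -/
def encState {m n : ℕ} (S : Submodule (ZMod 2) (Fvec m)) (Δ : Fvec m)
    (x z : Fin n → Fvec m) (ψ : QSpace n) : QSpaceN m n :=
  WithLp.toLp 2 (fun c => ∑ μ : Fvec n, ψ μ *
    ∏ i, (sgn (dotp (z i) (c i + x i)) * cosetState S (μ i • Δ) (c i + x i)))

/-- The dot product on `(𝔽₂^m)ⁿ`. -/
def bigDot {m n : ℕ} (u v : Fin n → Fvec m) : ZMod 2 := ∑ i, dotp (u i) (v i)

/-- The full Hadamard `(H^{⊗m})^{⊗n}` on `ℂ[(𝔽₂^m)ⁿ]`, with matrix entries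
`2^{−mn/2} (−1)^{u·v}`. -/
def HadBig {m n : ℕ} (Ψ : QSpaceN m n) : QSpaceN m n :=
  WithLp.toLp 2 (fun u => (Real.sqrt (2 ^ (m * n)) : ℂ)⁻¹ * ∑ v, sgn (bigDot u v) * Ψ v)

namespace Aux

lemma zmod2_cases (a : ZMod 2) : a = 0 ∨ a = 1 := by revert a; decide

lemma sgn_add (a b : ZMod 2) : sgn (a + b) = sgn a * sgn b := by
  rcases zmod2_cases a with h | h <;> rcases zmod2_cases b with h' | h' <;>
    subst h <;> subst h' <;> simp [sgn, show (1+1:ZMod 2)=0 from by decide]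

lemma norm_sgn (a : ZMod 2) : ‖sgn a‖ = 1 := by
  rcases zmod2_cases a with h | h <;> subst h <;> simp [sgn]

lemma dotp_comm {k : ℕ} (a b : Fvec k) : dotp a b = dotp b a := by
  simp [dotp, mul_comm]

lemma dotp_add_left {k : ℕ} (a b c : Fvec k) : dotp (a + b) c = dotp a c + dotp b c := by
  simp [dotp, add_mul, Finset.sum_add_distrib]

lemma dotp_add_right {k : ℕ} (a b c : Fvec k) : dotp a (b + c) = dotp a b + dotp a c := by
  simp [dotp, mul_add, Finset.sum_add_distrib]

lemma dotp_smul_right {k : ℕ} (r : ZMod 2) (a b : Fvec k) :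
    dotp a (r • b) = r * dotp a b := by
  simp [dotp, Finset.mul_sum]; ring_nf; simp [mul_comm, mul_left_comm]

lemma sgn_sum {ι : Type*} (s : Finset ι) (f : ι → ZMod 2) :
    sgn (∑ i ∈ s, f i) = ∏ i ∈ s, sgn (f i) := by
  classical
  induction s using Finset.induction_on with
  | empty => simp [sgn]
  | insert _ _ h ih => rw [Finset.sum_insert h, Finset.prod_insert h, sgn_add, ih]


lemma vec_add_add_cancel {k : ℕ} (a b : Fvec k) : a + b + b = a := by
  funext i
  have : ∀ x y : ZMod 2, x + y + y = x := by decide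
  exact this (a i) (b i)

lemma mem_dualSub {k : ℕ} (T : Submodule (ZMod 2) (Fvec k)) (t : Fvec k) :
    t ∈ dualSub T ↔ ∀ w ∈ T, dotp w t = 0 := by
  constructor
  · intro h w hw; rw [dotp_comm]; exact h w hw
  · intro h w hw; rw [dotp_comm]; exact h w hw

lemma char_sum {k : ℕ} (T : Submodule (ZMod 2) (Fvec k)) (t : Fvec k) :
    ∑ w ∈ Finset.univ.filter (· ∈ T), sgn (dotp w t)
      = if t ∈ dualSub T then ((Finset.univ.filter (· ∈ T)).card : ℂ) else 0 := by
  by_cases h : t ∈ dualSub T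
  · rw [if_pos h]
    rw [Finset.sum_congr rfl (fun w hw => ?_), Finset.sum_const, nsmul_eq_mul, mul_one]
    · rw [Finset.mem_filter] at hw
      rw [(mem_dualSub T t).mp h w hw.2]
      simp [sgn]
  · rw [if_neg h]
    rw [mem_dualSub] at h
    push_neg at h
    obtain ⟨w₀, hw₀, hne⟩ := h
    have h1 : dotp w₀ t = 1 := by
      rcases zmod2_cases (dotp w₀ t) with h' | h'
      · exact absurd h' hne
      · exact h'
    have key : ∑ w ∈ Finset.univ.filter (· ∈ T), sgn (dotp w t)
        = ∑ w ∈ Finset.univ.filter (· ∈ T), -sgn (dotp w t) := by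
      refine Finset.sum_nbij' (fun w => w + w₀) (fun w => w + w₀) ?_ ?_ ?_ ?_ ?_
      · intro a ha
        simp only [Finset.mem_filter, Finset.mem_univ, true_and] at ha ⊢
        exact T.add_mem ha hw₀
      · intro a ha
        simp only [Finset.mem_filter, Finset.mem_univ, true_and] at ha ⊢
        exact T.add_mem ha hw₀
      · intro a _; exact vec_add_add_cancel a w₀
      · intro a _; exact vec_add_add_cancel a w₀
      · intro a _
        rw [dotp_add_left, sgn_add, h1]
        simp [sgn]
    have := key
    have h2 : (2 : ℂ) * ∑ w ∈ Finset.univ.filter (· ∈ T), sgn (dotp w t) = 0 := by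
      rw [two_mul]; nth_rewrite 2 [key]; simp
    have h3 := mul_eq_zero.mp h2
    rcases h3 with h3 | h3
    · norm_num at h3
    · exact h3


lemma mem_dualSub_top {k : ℕ} (t : Fvec k) :
    t ∈ dualSub (⊤ : Submodule (ZMod 2) (Fvec k)) ↔ t = 0 := by
  constructor
  · intro h
    funext j
    have := h (Pi.single j 1) Submodule.mem_top
    rw [dotp_comm] at this
    simpa [dotp, Pi.single_apply, Finset.sum_ite_eq'] using this
  · rintro rfl t _
    simp [dotp]

lemma card_filter_eq {k : ℕ} (T : Submodule (ZMod 2) (Fvec k)) :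
    ((Finset.univ.filter (· ∈ T)).card : ℕ) = Nat.card ↥T := by
  rw [Nat.card_eq_fintype_card]
  exact (Fintype.card_subtype _).symm

lemma card_dual_mul {k : ℕ} (T : Submodule (ZMod 2) (Fvec k)) :
    ((Finset.univ.filter (· ∈ dualSub T)).card : ℂ) * ((Finset.univ.filter (· ∈ T)).card : ℂ)
      = 2 ^ k := by
  have lhs : ∑ t ∈ Finset.univ.filter (· ∈ T), ∑ w : Fvec k, sgn (dotp w t) = 2 ^ k := by
    have inner : ∀ t : Fvec k, ∑ w : Fvec k, sgn (dotp w t)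
        = if t = 0 then ((2 : ℂ) ^ k) else 0 := by
      intro t
      have : ∑ w : Fvec k, sgn (dotp w t)
          = ∑ w ∈ Finset.univ.filter (· ∈ (⊤ : Submodule (ZMod 2) (Fvec k))), sgn (dotp w t) := by
        rw [Finset.filter_true_of_mem (fun _ _ => Submodule.mem_top)]
      rw [this, char_sum]
      have hcard : ((Finset.univ.filter (· ∈ (⊤ : Submodule (ZMod 2) (Fvec k)))).card : ℂ)
          = 2 ^ k := by
        rw [Finset.filter_true_of_mem (fun _ _ => Submodule.mem_top)]
        simp [Finset.card_univ]
      rw [hcard]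
      by_cases h : t = 0
      · rw [if_pos ((mem_dualSub_top t).mpr h), if_pos h]
      · rw [if_neg (fun hc => h ((mem_dualSub_top t).mp hc)), if_neg h]
    rw [Finset.sum_congr rfl (fun t _ => inner t), Finset.sum_ite_eq' _ (0 : Fvec k)]
    rw [if_pos]
    simp [T.zero_mem]
  have swap : ∑ t ∈ Finset.univ.filter (· ∈ T), ∑ w : Fvec k, sgn (dotp w t)
      = ∑ w : Fvec k, ∑ t ∈ Finset.univ.filter (· ∈ T), sgn (dotp w t) := Finset.sum_comm
  have rhs : ∑ w : Fvec k, ∑ t ∈ Finset.univ.filter (· ∈ T), sgn (dotp w t)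
      = ((Finset.univ.filter (· ∈ dualSub T)).card : ℂ)
          * ((Finset.univ.filter (· ∈ T)).card : ℂ) := by
    have inner : ∀ w : Fvec k, ∑ t ∈ Finset.univ.filter (· ∈ T), sgn (dotp w t)
        = if w ∈ dualSub T then ((Finset.univ.filter (· ∈ T)).card : ℂ) else 0 := by
      intro w
      have : ∑ t ∈ Finset.univ.filter (· ∈ T), sgn (dotp w t)
          = ∑ t ∈ Finset.univ.filter (· ∈ T), sgn (dotp t w) := by
        exact Finset.sum_congr rfl (fun t _ => by rw [dotp_comm])
      rw [this, char_sum T w]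
    rw [Finset.sum_congr rfl (fun w _ => inner w)]
    rw [← Finset.sum_filter]
    simp [Finset.sum_const, mul_comm]
  rw [← rhs, ← swap, lhs]

lemma mem_dual_extSpan {k : ℕ} (S : Submodule (ZMod 2) (Fvec k)) (Δ : Fvec k) (w : Fvec k) :
    w ∈ dualSub (extSpan S Δ) ↔ w ∈ dualSub S ∧ dotp w Δ = 0 := by
  constructor
  · intro h
    refine ⟨fun t ht => h t (Submodule.mem_sup_left ht), ?_⟩
    exact h Δ (Submodule.mem_sup_right (Submodule.mem_span_singleton_self Δ))
  · rintro ⟨h1, h2⟩ t ht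
    rcases Submodule.mem_sup.mp ht with ⟨s, hs, r, hr, rfl⟩
    rcases Submodule.mem_span_singleton.mp hr with ⟨a, rfl⟩
    rw [dotp_add_right, dotp_smul_right, h1 s hs, h2]; ring


lemma zmod2_add_smul_cancel {k : ℕ} (w a b : Fvec k) : w + (a + b) + a = w + b := by
  funext i
  have : ∀ x y z : ZMod 2, x + (y + z) + y = x + z := by decide
  exact this (w i) (a i) (b i)

lemma reg_amp {m : ℕ} (S : Submodule (ZMod 2) (Fvec m)) (Δ u xx zz : Fvec m) (b : ZMod 2) :
    ∑ v : Fvec m, sgn (dotp u v) * (sgn (dotp zz (v + xx)) * cosetState S (b • Δ) (v + xx))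
    = if u + zz ∈ dualSub S
      then (Real.sqrt (Nat.card ↥S) : ℂ) * (sgn (dotp u xx) * sgn (b * dotp (u + zz) Δ))
      else 0 := by
  have K0 : 0 < Nat.card ↥S := Nat.card_pos
  set K : ℝ := (Nat.card ↥S : ℝ) with hK
  have hKpos : (0:ℝ) < K := Nat.cast_pos.mpr K0
  -- reindex v = w + (xx + b • Δ)
  have reindex : ∑ v : Fvec m, sgn (dotp u v) * (sgn (dotp zz (v + xx)) * cosetState S (b • Δ) (v + xx))
      = ∑ w : Fvec m, sgn (dotp u (w + (xx + b • Δ))) *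
          (sgn (dotp zz (w + b • Δ)) * (if w ∈ S then ((Real.sqrt K : ℂ))⁻¹ else 0)) := by
    refine (Fintype.sum_equiv (Equiv.addRight (xx + b • Δ)) _ _ (fun w => ?_)).symm
    simp only [Equiv.coe_addRight]
    congr 1
    rw [zmod2_add_smul_cancel w xx (b • Δ)]
    congr 1
    rw [cosetState, PiLp.toLp_apply]
    rw [vec_add_add_cancel w (b • Δ)]
  rw [reindex]
  have expand : ∀ w : Fvec m, sgn (dotp u (w + (xx + b • Δ))) *
      (sgn (dotp zz (w + b • Δ)) * (if w ∈ S then ((Real.sqrt K : ℂ))⁻¹ else 0))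
      = (sgn (dotp u xx) * (sgn (b * dotp u Δ) * sgn (b * dotp zz Δ)) * (Real.sqrt K : ℂ)⁻¹) *
        (if w ∈ S then sgn (dotp w (u + zz)) else 0) := by
    intro w
    by_cases hw : w ∈ S
    · rw [if_pos hw, if_pos hw]
      rw [dotp_add_right, dotp_add_right, dotp_smul_right, dotp_add_right, dotp_smul_right]
      rw [sgn_add, sgn_add, sgn_add]
      rw [dotp_comm w (u + zz), dotp_add_left, sgn_add]
      rw [dotp_comm u w, dotp_comm zz w]
      ring
    · rw [if_neg hw, if_neg hw]
      ring
  rw [Finset.sum_congr rfl (fun w _ => expand w), ← Finset.mul_sum]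
  have : ∑ w : Fvec m, (if w ∈ S then sgn (dotp w (u + zz)) else 0)
      = if u + zz ∈ dualSub S then ((Finset.univ.filter (· ∈ S)).card : ℂ) else 0 := by
    rw [← Finset.sum_filter, char_sum]
  rw [this]
  by_cases h : u + zz ∈ dualSub S
  · rw [if_pos h, if_pos h]
    have hcard : ((Finset.univ.filter (· ∈ S)).card : ℂ) = (K : ℂ) := by
      rw [card_filter_eq]; norm_num [hK]
    rw [hcard]
    have hsg : sgn (b * dotp u Δ) * sgn (b * dotp zz Δ) = sgn (b * dotp (u + zz) Δ) := by
      rw [dotp_add_left, mul_add, sgn_add]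
    rw [hsg]
    have hs : ((Real.sqrt K : ℂ))⁻¹ * (K : ℂ) = (Real.sqrt K : ℂ) := by
      have h1 : (Real.sqrt K) * (Real.sqrt K) = K := Real.mul_self_sqrt hKpos.le
      have h2 : (Real.sqrt K : ℂ) ≠ 0 := by
        norm_cast
        exact ne_of_gt (Real.sqrt_pos.mpr hKpos)
      have h3 : (K : ℂ) = (Real.sqrt K : ℂ) * (Real.sqrt K : ℂ) := by
        norm_cast; exact h1.symm
      rw [h3, inv_mul_cancel_left₀ h2]
    calc sgn (dotp u xx) * (sgn (b * dotp (u + zz) Δ)) * (Real.sqrt K : ℂ)⁻¹ * (K : ℂ)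
        = sgn (dotp u xx) * (sgn (b * dotp (u + zz) Δ)) * (((Real.sqrt K : ℂ))⁻¹ * (K : ℂ)) := by ring
      _ = (Real.sqrt K : ℂ) * (sgn (dotp u xx) * sgn (b * dotp (u + zz) Δ)) := by rw [hs]; ring
  · rw [if_neg h, if_neg h, mul_zero]


lemma amp {m n : ℕ} (S : Submodule (ZMod 2) (Fvec m)) (Δ : Fvec m) (x z : Fin n → Fvec m)
    (ψ : QSpace n) (c : Fin n → Fvec m) (h : ∀ i, c i + z i ∈ dualSub S) :
    HadBig (encState S Δ x z ψ) c
      = (Real.sqrt (2 ^ (m * n)) : ℂ)⁻¹ * ((Real.sqrt (Nat.card ↥S) : ℂ) ^ n *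
          ((∏ i, sgn (dotp (c i) (x i))) *
            ((Real.sqrt (2 ^ n) : ℂ) * Had ψ (fun i => dotp (c i + z i) Δ)))) := by
  set K : ℂ := (Real.sqrt (Nat.card ↥S) : ℂ) with hK
  set ν : Fvec n := fun i => dotp (c i + z i) Δ with hν
  simp only [HadBig, encState]
  congr 1
  calc ∑ v : Fin n → Fvec m, sgn (bigDot c v) *
          ∑ μ' : Fvec n, ψ μ' * ∏ i, (sgn (dotp (z i) (v i + x i)) * cosetState S (μ' i • Δ) (v i + x i))
      = ∑ v : Fin n → Fvec m, ∑ μ' : Fvec n, ψ μ' *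
          ∏ i, (sgn (dotp (c i) (v i)) * (sgn (dotp (z i) (v i + x i)) * cosetState S (μ' i • Δ) (v i + x i))) := by
        refine Finset.sum_congr rfl (fun v _ => ?_)
        rw [Finset.mul_sum]
        refine Finset.sum_congr rfl (fun μ' _ => ?_)
        have hbig : sgn (bigDot c v) = ∏ i, sgn (dotp (c i) (v i)) := by
          rw [bigDot, sgn_sum]
        rw [hbig]
        simp only [Finset.prod_mul_distrib]
        ring
    _ = ∑ μ' : Fvec n, ∑ v : Fin n → Fvec m, ψ μ' *
          ∏ i, (sgn (dotp (c i) (v i)) * (sgn (dotp (z i) (v i + x i)) * cosetState S (μ' i • Δ) (v i + x i))) :=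
        Finset.sum_comm
    _ = ∑ μ' : Fvec n, ψ μ' *
          ∏ i, ∑ w : Fvec m, (sgn (dotp (c i) w) * (sgn (dotp (z i) (w + x i)) * cosetState S (μ' i • Δ) (w + x i))) := by
        refine Finset.sum_congr rfl (fun μ' _ => ?_)
        rw [← Finset.mul_sum, Fintype.prod_sum]
    _ = ∑ μ' : Fvec n, ψ μ' *
          ∏ i, (K * (sgn (dotp (c i) (x i)) * sgn (μ' i * ν i))) := by
        refine Finset.sum_congr rfl (fun μ' _ => ?_)
        congr 1
        refine Finset.prod_congr rfl (fun i _ => ?_)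
        rw [reg_amp S Δ (c i) (x i) (z i) (μ' i), if_pos (h i)]
    _ = ∑ μ' : Fvec n, ψ μ' *
          (K ^ n * ((∏ i, sgn (dotp (c i) (x i))) * sgn (dotp μ' ν))) := by
        refine Finset.sum_congr rfl (fun μ' _ => ?_)
        congr 1
        rw [Finset.prod_mul_distrib, Finset.prod_mul_distrib, Finset.prod_const, Finset.card_univ]
        congr 2
        · simp
        · rw [← sgn_sum]; rfl
    _ = K ^ n * ((∏ i, sgn (dotp (c i) (x i))) * ((Real.sqrt (2 ^ n) : ℂ) * Had ψ ν)) := by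
        have h2 : (Real.sqrt (2 ^ n) : ℂ) ≠ 0 := by
          norm_cast
          exact ne_of_gt (Real.sqrt_pos.mpr (by positivity))
        simp only [Had]
        rw [mul_inv_cancel_left₀ h2]
        rw [Finset.mul_sum, Finset.mul_sum]
        refine Finset.sum_congr rfl (fun μ' _ => ?_)
        rw [dotp_comm ν μ']
        ring


lemma dotp_smul_left {k : ℕ} (r : ZMod 2) (a b : Fvec k) :
    dotp (r • a) b = r * dotp a b := by
  rw [dotp_comm, dotp_smul_right, dotp_comm]

lemma vec_reassoc {k : ℕ} (a b c : Fvec k) : a + b + c = (a + c) + b := by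
  funext i
  have : ∀ x y z : ZMod 2, x + y + z = (x + z) + y := by decide
  exact this (a i) (b i) (c i)

end Aux

open Aux

/-- For every subspace `S ⊆ 𝔽₂^m`, `Δ ∉ S`, `Ŝ := (S_Δ)⊥`, `Δ̂ ∈ S⊥ ∖ Ŝ`, one-time-pad
keys `x, z ∈ (𝔽₂^m)ⁿ`, state `ψ ∈ ℂ[𝔽₂ⁿ]`, and outcome `μ ∈ 𝔽₂ⁿ`:
`∑_{c : ∀ i, cᵢ ∈ Ŝ + μᵢΔ̂ + zᵢ} |⟨c| (H^{⊗m})^{⊗n} X^x Z^z E_{S,Δ}^{⊗n} ψ⟩|²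
  = |(H^{⊗n}ψ)(μ)|²`
(note `cᵢ ∈ Ŝ + μᵢΔ̂ + zᵢ` iff `cᵢ + μᵢΔ̂ + zᵢ ∈ Ŝ`, as we are in characteristic
two). -/
theorem hadamard_basis_measurement_of_authenticated_state
    {m n : ℕ} (hm : 1 ≤ m) (hn : 1 ≤ n)
    (S : Submodule (ZMod 2) (Fvec m)) (Δ : Fvec m) (hΔ : Δ ∉ S)
    (Δhat : Fvec m) (hΔhat₁ : Δhat ∈ dualSub S) (hΔhat₂ : Δhat ∉ dualSub (extSpan S Δ))
    (x z : Fin n → Fvec m) (ψ : QSpace n) (μ : Fvec n) :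
    ∑ c : Fin n → Fvec m,
      (if ∀ i, c i + (μ i • Δhat) + z i ∈ dualSub (extSpan S Δ)
        then ‖HadBig (encState S Δ x z ψ) c‖ ^ 2 else 0)
      = ‖Had ψ μ‖ ^ 2 := by
  classical
  -- basic facts
  have hΔΔ : dotp Δhat Δ = 1 := by
    rcases zmod2_cases (dotp Δhat Δ) with h | h
    · exact absurd ((mem_dual_extSpan S Δ Δhat).mpr ⟨hΔhat₁, h⟩) hΔhat₂
    · exact h
  -- characterization of the per-register constraint
  have key : ∀ (w : Fvec m) (b : ZMod 2) (zz : Fvec m),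
      (w + b • Δhat + zz ∈ dualSub (extSpan S Δ))
        ↔ ((w + zz ∈ dualSub S) ∧ dotp (w + zz) Δ = b) := by
    intro w b zz
    rw [vec_reassoc w (b • Δhat) zz, mem_dual_extSpan]
    have hmemiff : (w + zz) + b • Δhat ∈ dualSub S ↔ w + zz ∈ dualSub S := by
      constructor
      · intro hmem
        have h2 := (dualSub S).add_mem hmem ((dualSub S).smul_mem b hΔhat₁)
        rwa [vec_add_add_cancel] at h2
      · intro hmem
        exact (dualSub S).add_mem hmem ((dualSub S).smul_mem b hΔhat₁)
    have hdotiff : dotp ((w + zz) + b • Δhat) Δ = 0 ↔ dotp (w + zz) Δ = b := by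
      rw [dotp_add_left, dotp_smul_left, hΔΔ, mul_one]
      have : ∀ a b : ZMod 2, (a + b = 0 ↔ a = b) := by decide
      exact this _ _
    exact and_congr hmemiff hdotiff
  -- cardinalities
  set Knat : ℕ := Nat.card ↥S with hKnat
  set a : ℕ := (Finset.univ.filter (· ∈ dualSub (extSpan S Δ))).card with ha
  set N : ℕ := (Finset.univ.filter (· ∈ dualSub S)).card with hN
  have hNK : N * Knat = 2 ^ m := by
    have := card_dual_mul S
    rw [card_filter_eq S] at this
    exact_mod_cast this
  have haN : 2 * a = N := by
    have hsplit := Finset.card_filter_add_card_filter_not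
      (s := Finset.univ.filter (· ∈ dualSub S)) (p := fun w => dotp w Δ = 0)
    have h0 : (Finset.univ.filter (· ∈ dualSub S)).filter (fun w => dotp w Δ = 0)
        = Finset.univ.filter (· ∈ dualSub (extSpan S Δ)) := by
      ext w
      simp only [Finset.mem_filter, Finset.mem_univ, true_and]
      rw [mem_dual_extSpan]
    have h1 : ((Finset.univ.filter (· ∈ dualSub S)).filter (fun w => ¬ dotp w Δ = 0)).card
        = a := by
      rw [ha, ← h0]
      refine Finset.card_nbij' (fun w => w + Δhat) (fun w => w + Δhat) ?_ ?_ ?_ ?_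
      · intro w hw
        simp only [Finset.mem_coe, Finset.mem_filter, Finset.mem_univ, true_and] at hw ⊢
        obtain ⟨hw1, hw2⟩ := hw
        have hd1 : dotp w Δ = 1 := by
          rcases zmod2_cases (dotp w Δ) with h | h
          · exact absurd h hw2
          · exact h
        refine ⟨(dualSub S).add_mem hw1 hΔhat₁, ?_⟩
        rw [dotp_add_left, hd1, hΔΔ]
        decide
      · intro w hw
        simp only [Finset.mem_coe, Finset.mem_filter, Finset.mem_univ, true_and] at hw ⊢
        obtain ⟨hw1, hw2⟩ := hw
        refine ⟨(dualSub S).add_mem hw1 hΔhat₁, ?_⟩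
        rw [dotp_add_left, hw2, hΔΔ]
        decide
      · intro w _
        exact vec_add_add_cancel w Δhat
      · intro w _
        exact vec_add_add_cancel w Δhat
    rw [h0, h1] at hsplit
    omega
  have hKnat0 : 0 < Knat := Nat.card_pos
  -- final numeric identity
  have hnum : ((a : ℝ)) ^ n * (((2 : ℝ) ^ (m * n))⁻¹ * ((Knat : ℝ) ^ n * 2 ^ n)) = 1 := by
    have h2a : ((a : ℝ) * Knat * 2) = 2 ^ m := by
      have : (2 * a * Knat : ℕ) = 2 ^ m := by rw [mul_assoc, ← hNK, ← haN]; ring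
      calc ((a : ℝ) * Knat * 2) = ((2 * a * Knat : ℕ) : ℝ) := by push_cast; ring
        _ = ((2 ^ m : ℕ) : ℝ) := by rw [this]
        _ = 2 ^ m := by push_cast; ring
    have hpow : ((a : ℝ)) ^ n * ((Knat : ℝ) ^ n * 2 ^ n) = 2 ^ (m * n) := by
      rw [pow_mul]
      rw [← h2a]
      ring
    have h2pos : (0:ℝ) < 2 ^ (m * n) := by positivity
    field_simp
    linarith [hpow]
  -- value of the summand on the constrained set
  set H : ℝ := ‖Had ψ μ‖ ^ 2 with hH
  set V : ℝ := ((2 : ℝ) ^ (m * n))⁻¹ * ((Knat : ℝ) ^ n * (2 ^ n * H)) with hV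
  have hval : ∀ c : Fin n → Fvec m,
      (∀ i, c i + (μ i • Δhat) + z i ∈ dualSub (extSpan S Δ)) →
      ‖HadBig (encState S Δ x z ψ) c‖ ^ 2 = V := by
    intro c hc
    have h1 : ∀ i, c i + z i ∈ dualSub S := fun i => ((key (c i) (μ i) (z i)).mp (hc i)).1
    have h2 : (fun i => dotp (c i + z i) Δ) = μ := by
      funext i
      exact ((key (c i) (μ i) (z i)).mp (hc i)).2
    rw [amp S Δ x z ψ c h1, h2]
    have e1 : (0:ℝ) ≤ (2:ℝ) ^ (m*n) := by positivity
    have e2 : (0:ℝ) ≤ (Knat : ℝ) := by positivity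
    have e3 : (0:ℝ) ≤ (2:ℝ) ^ n := by positivity
    rw [norm_mul, norm_mul, norm_mul, norm_mul, norm_inv, norm_pow]
    have hs : ∀ r : ℝ, 0 ≤ r → ‖((Real.sqrt r : ℝ) : ℂ)‖ = Real.sqrt r := by
      intro r hr
      rw [Complex.norm_real, Real.norm_eq_abs, abs_of_nonneg (Real.sqrt_nonneg r)]
    rw [hs _ e1, hs _ e2, hs _ e3]
    have hprod : ‖∏ i, sgn (dotp (c i) (x i))‖ = 1 := by
      rw [norm_prod]
      exact Finset.prod_eq_one (fun i _ => norm_sgn _)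
    rw [hprod]
    rw [hV, hH]
    calc ((Real.sqrt ((2:ℝ)^(m*n)))⁻¹ * ((Real.sqrt (Knat:ℝ)) ^ n *
            (1 * (Real.sqrt ((2:ℝ)^n) * ‖Had ψ μ‖)))) ^ 2
        = ((Real.sqrt ((2:ℝ)^(m*n)))^2)⁻¹ * (((Real.sqrt (Knat:ℝ))^2) ^ n *
            (((Real.sqrt ((2:ℝ)^n))^2) * ‖Had ψ μ‖^2)) := by ring
      _ = ((2:ℝ) ^ (m * n))⁻¹ * ((Knat : ℝ) ^ n * (2 ^ n * ‖Had ψ μ‖ ^ 2)) := by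
          rw [Real.sq_sqrt e1, Real.sq_sqrt e2, Real.sq_sqrt e3]
  -- summing
  calc ∑ c : Fin n → Fvec m,
      (if ∀ i, c i + (μ i • Δhat) + z i ∈ dualSub (extSpan S Δ)
        then ‖HadBig (encState S Δ x z ψ) c‖ ^ 2 else 0)
      = ∑ c : Fin n → Fvec m,
        (if ∀ i, c i + (μ i • Δhat) + z i ∈ dualSub (extSpan S Δ) then (1:ℝ) else 0) * V := by
        refine Finset.sum_congr rfl (fun c _ => ?_)
        by_cases hc : ∀ i, c i + (μ i • Δhat) + z i ∈ dualSub (extSpan S Δ)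
        · rw [if_pos hc, if_pos hc, hval c hc, one_mul]
        · rw [if_neg hc, if_neg hc, zero_mul]
    _ = (∑ c : Fin n → Fvec m,
        (if ∀ i, c i + (μ i • Δhat) + z i ∈ dualSub (extSpan S Δ) then (1:ℝ) else 0)) * V := by
        rw [Finset.sum_mul]
    _ = ((a : ℝ)) ^ n * V := by
        congr 1
        calc ∑ c : Fin n → Fvec m,
            (if ∀ i, c i + (μ i • Δhat) + z i ∈ dualSub (extSpan S Δ) then (1:ℝ) else 0)
            = ∑ c : Fin n → Fvec m,
              ∏ i, (if c i + (μ i • Δhat) + z i ∈ dualSub (extSpan S Δ) then (1:ℝ) else 0) := by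
              refine Finset.sum_congr rfl (fun c _ => ?_)
              rw [Finset.prod_boole]
              simp
          _ = ∏ i, ∑ w : Fvec m,
              (if w + (μ i • Δhat) + z i ∈ dualSub (extSpan S Δ) then (1:ℝ) else 0) := by
              rw [Fintype.prod_sum]
          _ = ∏ i : Fin n, ((a : ℝ)) := by
              refine Finset.prod_congr rfl (fun i _ => ?_)
              have hre : ∑ w : Fvec m,
                  (if w + (μ i • Δhat) + z i ∈ dualSub (extSpan S Δ) then (1:ℝ) else 0)
                  = ∑ w : Fvec m, (if w ∈ dualSub (extSpan S Δ) then (1:ℝ) else 0) := by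
                refine Fintype.sum_equiv (Equiv.addRight ((μ i • Δhat) + z i)) _ _ (fun w => ?_)
                simp only [Equiv.coe_addRight, ← add_assoc]
              rw [hre, Finset.sum_boole, ha]
          _ = ((a : ℝ)) ^ n := by
              rw [Finset.prod_const, Finset.card_univ]
              simp
    _ = ‖Had ψ μ‖ ^ 2 := by
        rw [hV, ← hH]
        calc ((a:ℝ))^n * (((2 : ℝ) ^ (m * n))⁻¹ * ((Knat : ℝ) ^ n * (2 ^ n * H)))
            = (((a : ℝ)) ^ n * (((2 : ℝ) ^ (m * n))⁻¹ * ((Knat : ℝ) ^ n * 2 ^ n))) * H := by ring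
          _ = H := by rw [hnum, one_mul]
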